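/- Let W ≤ S_d be a permutation group and χ : W → U(K) a character. Assume K is an integral domain and |W| is invertible in K, and let E be a free K-module with basis (e_ℓ)_{ℓ∈L}. Let W act on the set L^d of multi-indices by (σi)_t = i_{σ⁻¹(t)}, let W_i denote the stabilizer of i ∈ L^d, choose one representative from each W-orbit in L^d, and let J(χ,T^d(E)) be the set of those chosen representatives j for which χ is trivial on W_j. Then the d-th semi-symmetric power [χ]^d(E) is a free K-module with basis (e_{j₁}χ⋯χe_{j_d})_{j∈J(χ,T^d(E))}. -/

import Mathlib

noncomputable section

open scoped TensorProduct

/-- The action of a permutation `σ` of `Fin d` on the `d`-th tensor power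
`T^d(E)`, determined by `σ • (x₁ ⊗ ⋯ ⊗ x_d) = x_{σ⁻¹(1)} ⊗ ⋯ ⊗ x_{σ⁻¹(d)}`. -/
def permAct (K : Type*) [CommRing K] (E : Type*) [AddCommGroup E] [Module K E]
    (d : ℕ) (σ : Equiv.Perm (Fin d)) :
    (⨂[K] (_ : Fin d), E) ≃ₗ[K] ⨂[K] (_ : Fin d), E :=
  PiTensorProduct.reindex K (fun _ : Fin d => E) σ

/-- The submodule `_{χ⁻¹}T^d(E)` of `T^d(E)` generated by the elements
`χ⁻¹(σ) z − σ z` for `σ ∈ W`; the quotient by it is the `d`-th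
semi-symmetric power `[χ]^d(E)` of weight `χ`. -/
def chiKer {K : Type*} [CommRing K] (E : Type*) [AddCommGroup E] [Module K E]
    {d : ℕ} (W : Subgroup (Equiv.Perm (Fin d))) (χ : W →* Kˣ) :
    Submodule K (⨂[K] (_ : Fin d), E) :=
  Submodule.span K {w | ∃ (σ : W) (z : ⨂[K] (_ : Fin d), E),
    w = (((χ σ)⁻¹ : Kˣ) : K) • z - permAct K E d (σ : Equiv.Perm (Fin d)) z}

/-- The `d`-th semi-symmetric power `[χ]^d(E) = T^d(E)/_{χ⁻¹}T^d(E)`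
of weight `χ` of the `K`-module `E`. -/
abbrev SemiPow {K : Type*} [CommRing K] (E : Type*) [AddCommGroup E] [Module K E]
    {d : ℕ} (W : Subgroup (Equiv.Perm (Fin d))) (χ : W →* Kˣ) :=
  (⨂[K] (_ : Fin d), E) ⧸ chiKer E W χ

/-- The decomposable `d-χ`-vector `x₁ χ ⋯ χ x_d`. -/
def semiMk {K : Type*} [CommRing K] {E : Type*} [AddCommGroup E] [Module K E]
    {d : ℕ} (W : Subgroup (Equiv.Perm (Fin d))) (χ : W →* Kˣ)
    (x : Fin d → E) : SemiPow E W χ :=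
  Submodule.Quotient.mk (PiTensorProduct.tprod K x)

open PiTensorProduct

section Aux
variable {K : Type*} [CommRing K] {E : Type*} [AddCommGroup E] [Module K E] {d : ℕ}

theorem permAct_tprod (σ : Equiv.Perm (Fin d)) (x : Fin d → E) :
    permAct K E d σ (tprod K x) = tprod K (fun t => x (σ⁻¹ t)) :=
  PiTensorProduct.reindex_tprod σ x

theorem permAct_permAct (σ τ : Equiv.Perm (Fin d)) (z : ⨂[K] (_ : Fin d), E) :
    permAct K E d σ (permAct K E d τ z) = permAct K E d (σ * τ) z :=
  PiTensorProduct.reindex_reindex τ σ z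
end Aux

section Proj
variable {K : Type*} [CommRing K] {E : Type*} [AddCommGroup E] [Module K E] {d : ℕ}
  (W : Subgroup (Equiv.Perm (Fin d))) (χ : W →* Kˣ) [Fintype W]

def projP (u : Kˣ) : (⨂[K] (_ : Fin d), E) →ₗ[K] ⨂[K] (_ : Fin d), E :=
  (↑u⁻¹ : K) • ∑ σ : W, ((χ σ : Kˣ) : K) • ((permAct K E d (σ : Equiv.Perm (Fin d))).toLinearMap)

theorem projP_apply (u : Kˣ) (z : ⨂[K] (_ : Fin d), E) :
    projP W χ u z = (↑u⁻¹ : K) • ∑ σ : W,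
      ((χ σ : Kˣ) : K) • permAct K E d (σ : Equiv.Perm (Fin d)) z := by
  simp [projP, LinearMap.sum_apply]

theorem projP_permAct (u : Kˣ) (σ : W) (z : ⨂[K] (_ : Fin d), E) :
    projP W χ u (permAct K E d (σ : Equiv.Perm (Fin d)) z)
      = ((((χ σ)⁻¹ : Kˣ)) : K) • projP W χ u z := by
  rw [projP_apply, projP_apply,
    smul_comm ((((χ σ)⁻¹ : Kˣ)) : K) ((↑u⁻¹ : K))]
  congr 1
  rw [Finset.smul_sum]
  refine Fintype.sum_equiv (Equiv.mulRight σ)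
    (fun τ : W => ((χ τ : Kˣ) : K) •
      permAct K E d (τ : Equiv.Perm (Fin d)) (permAct K E d (σ : Equiv.Perm (Fin d)) z))
    (fun ρ : W => ((((χ σ)⁻¹ : Kˣ)) : K) • (((χ ρ : Kˣ) : K) •
      permAct K E d (ρ : Equiv.Perm (Fin d)) z)) (fun τ => ?_)
  rw [permAct_permAct, smul_smul]
  have h1 : ((Equiv.mulRight σ τ : W) : Equiv.Perm (Fin d))
      = (τ : Equiv.Perm (Fin d)) * (σ : Equiv.Perm (Fin d)) := rfl
  rw [h1]
  congr 1
  have : χ (Equiv.mulRight σ τ) = χ τ * χ σ := by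
    simp [Equiv.mulRight, _root_.map_mul]
  rw [this]
  push_cast
  rw [mul_left_comm, Units.inv_mul, mul_one]
end Proj

section Proj2
variable {K : Type*} [CommRing K] {E : Type*} [AddCommGroup E] [Module K E] {d : ℕ}
  (W : Subgroup (Equiv.Perm (Fin d))) (χ : W →* Kˣ) [Fintype W]

theorem sub_projP_mem (u : Kˣ) (hu : (u : K) = (Fintype.card W : K))
    (z : ⨂[K] (_ : Fin d), E) : z - projP W χ u z ∈ chiKer E W χ := by
  have : z - projP W χ u z = (↑u⁻¹ : K) • ∑ σ : W,
      ((χ σ : Kˣ) : K) • ((((χ σ)⁻¹ : Kˣ) : K) • z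
        - permAct K E d (σ : Equiv.Perm (Fin d)) z) := by
    rw [projP_apply]
    have h1 : ∀ σ : W, ((χ σ : Kˣ) : K) • ((((χ σ)⁻¹ : Kˣ) : K) • z
        - permAct K E d (σ : Equiv.Perm (Fin d)) z)
        = z - ((χ σ : Kˣ) : K) • permAct K E d (σ : Equiv.Perm (Fin d)) z := by
      intro σ
      rw [smul_sub, smul_smul]
      simp
    rw [Finset.sum_congr rfl (fun σ _ => h1 σ), Finset.sum_sub_distrib, smul_sub]
    congr 1
    rw [Finset.sum_const, Finset.card_univ, ← Nat.cast_smul_eq_nsmul K, ← hu, smul_smul,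
      u.inv_mul, one_smul]
  rw [this]
  refine Submodule.smul_mem _ _ (Submodule.sum_mem _ (fun σ _ => Submodule.smul_mem _ _ ?_))
  exact Submodule.subset_span ⟨σ, z, rfl⟩

theorem chiKer_eq (u : Kˣ) (hu : (u : K) = (Fintype.card W : K)) :
    chiKer E W χ = LinearMap.ker (projP W χ u) := by
  apply le_antisymm
  · rw [chiKer, Submodule.span_le]
    rintro w ⟨σ, z, rfl⟩
    simp only [SetLike.mem_coe, LinearMap.mem_ker, map_sub, map_smul]
    rw [projP_permAct]
    simp
  · intro z hz
    rw [LinearMap.mem_ker] at hz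
    have := sub_projP_mem W χ u hu z
    rwa [hz, sub_zero] at this
end Proj2

section Coord
variable {K : Type*} [CommRing K] {E : Type*} [AddCommGroup E] [Module K E] {d : ℕ}
  {L : Type*} [DecidableEq L] (b : Module.Basis L K E)

def toDF : E →ₗ[K] (Π₀ _ : L, K) :=
  (Finsupp.lsum ℕ (fun l => LinearMap.toSpanSingleton K _ (DFinsupp.single l (1 : K)))) ∘ₗ
    (b.repr : E →ₗ[K] (L →₀ K))

theorem toDF_basis (l : L) : toDF b (b l) = DFinsupp.single l 1 := by
  simp [toDF, LinearMap.toSpanSingleton_apply]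

def coordMap (d : ℕ) : (⨂[K] (_ : Fin d), E) →ₗ[K] (Π₀ _ : Fin d → L, K) :=
  PiTensorProduct.lift ((MultilinearMap.dfinsuppFamily
    (fun _ : Fin d → L => MultilinearMap.mkPiAlgebra K (Fin d) K)).compLinearMap
    (fun _ => toDF b))

theorem coordMap_tprod_basis (i : Fin d → L) :
    coordMap b d (tprod K (fun t => b (i t))) = DFinsupp.single i 1 := by
  rw [coordMap, PiTensorProduct.lift.tprod, MultilinearMap.compLinearMap_apply]
  have : (fun t => toDF b (b (i t))) = fun t => DFinsupp.single (i t) (1 : K) := by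
    funext t; exact toDF_basis b (i t)
  rw [this, MultilinearMap.dfinsuppFamily_single]
  simp

def fromDF (d : ℕ) : (Π₀ _ : Fin d → L, K) →ₗ[K] (⨂[K] (_ : Fin d), E) :=
  DFinsupp.lsum ℕ (fun i => LinearMap.toSpanSingleton K _ (tprod K (fun t => b (i t))))

theorem span_tprod_basis_eq_top :
    Submodule.span K (Set.range (fun i : Fin d → L => tprod K (fun t => b (i t))))
      = (⊤ : Submodule K (⨂[K] (_ : Fin d), E)) := by
  rw [eq_top_iff, ← PiTensorProduct.span_tprod_eq_top, Submodule.span_le]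
  rintro _ ⟨x, rfl⟩
  have hx : ∀ t, x t = ∑ l ∈ (b.repr (x t)).support, (b.repr (x t)) l • b l := by
    intro t
    conv_lhs => rw [← b.linearCombination_repr (x t)]
    rfl
  have hrw := congrArg (⇑(PiTensorProduct.tprod K (s := fun _ : Fin d => E))) (funext hx)
  rw [hrw]
  rw [MultilinearMap.map_sum_finset]
  refine Submodule.sum_mem _ (fun r _ => ?_)
  rw [MultilinearMap.map_smul_univ]
  exact Submodule.smul_mem _ _ (Submodule.subset_span ⟨fun t => r t, rfl⟩)

theorem fromDF_coordMap (z : ⨂[K] (_ : Fin d), E) : fromDF b d (coordMap b d z) = z := by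
  have : (fromDF b d) ∘ₗ (coordMap b d) = LinearMap.id := by
    apply LinearMap.ext_on (span_tprod_basis_eq_top b)
    rintro _ ⟨i, rfl⟩
    simp only [LinearMap.comp_apply, LinearMap.id_apply, coordMap_tprod_basis]
    simp [fromDF]
  exact DFunLike.congr_fun this z

theorem coordMap_injective : Function.Injective (coordMap b d) := by
  intro x y h
  have := congrArg (fromDF b d) h
  rwa [fromDF_coordMap, fromDF_coordMap] at this

include b in
theorem smul_cancel {a : K} (ha : a ≠ 0) [IsDomain K] {z : ⨂[K] (_ : Fin d), E}
    (h : a • z = 0) : z = 0 := by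
  apply coordMap_injective b
  rw [map_zero]
  ext p
  have := congrArg (fun w => coordMap b d w p) h
  simp only [map_smul, map_zero] at this
  have : a * (coordMap b d z p) = 0 := this
  rcases mul_eq_zero.mp this with h' | h'
  · exact absurd h' ha
  · simpa using h'
end Coord

/-- Corollary II.7. Let `W ≤ S_d`, `χ : W → U(K)`, `K` an
integral domain, `|W| ∈ U(K)`, and `E` free with basis `(e_ℓ)_{ℓ ∈ L}`.
`W` acts on multi-indices `L^d` by `(σ i)_t = i_{σ⁻¹(t)}`; `R` is a chosen
set of representatives of the `W`-orbits, and `J(χ,T^d(E))` consists of the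
chosen representatives `j` on whose stabilizer `χ` is trivial. Then
`[χ]^d(E)` is free with basis `(e_{j₁} χ ⋯ χ e_{j_d})_{j ∈ J(χ,T^d(E))}`. -/
theorem semiPow_basis {K : Type*} [CommRing K] [IsDomain K]
    {E : Type*} [AddCommGroup E] [Module K E]
    {d : ℕ} (W : Subgroup (Equiv.Perm (Fin d))) (χ : W →* Kˣ)
    (hcard : IsUnit ((Nat.card W : K)))
    {L : Type*} (b : Module.Basis L K E)
    (R : Set (Fin d → L))
    (hR : ∀ i : Fin d → L, ∃! j, j ∈ R ∧
      ∃ σ : W, j = i ∘ ⇑(((σ : Equiv.Perm (Fin d)))⁻¹)) :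
    ∃ B : Module.Basis {j : Fin d → L // j ∈ R ∧
        ∀ σ : W, j ∘ ⇑(((σ : Equiv.Perm (Fin d)))⁻¹) = j → χ σ = 1} K
        (SemiPow E W χ),
      ∀ j, B j = semiMk W χ (fun t => b (j.1 t)) := by
  classical
  letI : Fintype W := Fintype.ofFinite W
  obtain ⟨u, hu0⟩ := hcard
  have hu : (u : K) = (Fintype.card W : K) := by rw [hu0, Nat.card_eq_fintype_card]
  set bT : (Fin d → L) → (⨂[K] (_ : Fin d), E) :=
    fun i => PiTensorProduct.tprod K (fun t => b (i t)) with hbTdef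
  set P := projP (E := E) W χ u with hPdef
  have hker : chiKer E W χ = LinearMap.ker P := chiKer_eq W χ u hu
  -- action of permutations on the distinguished tensors
  have hbT : ∀ (σ : W) (i : Fin d → L),
      permAct K E d (σ : Equiv.Perm (Fin d)) (bT i)
        = bT (i ∘ ⇑(((σ : Equiv.Perm (Fin d)))⁻¹)) := by
    intro σ i
    rw [hbTdef, permAct_tprod]
    rfl
  -- the relation in the quotient
  have hmk : ∀ (σ : W) (i : Fin d → L),
      (Submodule.Quotient.mk (p := chiKer E W χ)
          (bT (i ∘ ⇑(((σ : Equiv.Perm (Fin d)))⁻¹))))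
        = (((χ σ)⁻¹ : Kˣ) : K) •
          (Submodule.Quotient.mk (p := chiKer E W χ) (bT i)) := by
    intro σ i
    rw [← Submodule.Quotient.mk_smul (chiKer E W χ)]
    refine (Submodule.Quotient.eq _).mpr ?_
    have : bT (i ∘ ⇑(((σ : Equiv.Perm (Fin d)))⁻¹)) - (((χ σ)⁻¹ : Kˣ) : K) • bT i
        = -((((χ σ)⁻¹ : Kˣ) : K) • bT i
          - permAct K E d (σ : Equiv.Perm (Fin d)) (bT i)) := by
      rw [hbT σ i]; abel
    rw [this]
    exact Submodule.neg_mem _ (Submodule.subset_span ⟨σ, bT i, rfl⟩)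
  -- P kills representatives with non-trivial character on the stabilizer
  have hPzero : ∀ j : Fin d → L,
      (∃ τ : W, j ∘ ⇑(((τ : Equiv.Perm (Fin d)))⁻¹) = j ∧ χ τ ≠ 1) →
      P (bT j) = 0 := by
    intro j ⟨τ, hτ, hχτ⟩
    set S := ∑ σ : W, ((χ σ : Kˣ) : K) •
      bT (j ∘ ⇑(((σ : Equiv.Perm (Fin d)))⁻¹)) with hSdef
    have hPS : P (bT j) = (↑u⁻¹ : K) • S := by
      rw [hPdef, projP_apply]
      congr 1
      exact Finset.sum_congr rfl (fun σ _ => by rw [hbT σ j])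
    have hS2 : S = ((χ τ : Kˣ) : K) • S := by
      rw [hSdef, Finset.smul_sum]
      refine Fintype.sum_equiv (Equiv.mulRight τ⁻¹)
        (fun σ : W => ((χ σ : Kˣ) : K) •
          bT (j ∘ ⇑(((σ : Equiv.Perm (Fin d)))⁻¹)))
        (fun σ : W => ((χ τ : Kˣ) : K) • (((χ σ : Kˣ) : K) •
          bT (j ∘ ⇑(((σ : Equiv.Perm (Fin d)))⁻¹)))) (fun σ => ?_)
      simp only [Equiv.coe_mulRight]
      rw [smul_smul]
      have hco : ((χ τ : Kˣ) : K) * ((χ (σ * τ⁻¹) : Kˣ) : K) = ((χ σ : Kˣ) : K) := by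
        rw [_root_.map_mul, map_inv, Units.val_mul, mul_comm ((χ σ : Kˣ) : K),
          ← mul_assoc, Units.mul_inv, one_mul]
      have hfun : j ∘ ⇑((((σ * τ⁻¹ : W) : Equiv.Perm (Fin d)))⁻¹)
          = j ∘ ⇑(((σ : Equiv.Perm (Fin d)))⁻¹) := by
        funext t
        have h1 : ((((σ * τ⁻¹ : W) : Equiv.Perm (Fin d)))⁻¹ : Equiv.Perm (Fin d)) t
            = ((τ : Equiv.Perm (Fin d)))
              (((σ : Equiv.Perm (Fin d)))⁻¹ t) := by
          simp [mul_inv_rev, Equiv.Perm.mul_apply]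
        rw [Function.comp_apply, Function.comp_apply, h1]
        have h2 := congrFun hτ (((τ : Equiv.Perm (Fin d)))
          (((σ : Equiv.Perm (Fin d)))⁻¹ t))
        simp only [Function.comp_apply, Equiv.Perm.inv_def, Equiv.symm_apply_apply] at h2
        exact h2.symm
      rw [hco, hfun]
    have hSzero : S = 0 := by
      have hne : ((χ τ : Kˣ) : K) - 1 ≠ 0 := by
        intro h
        exact hχτ (Units.ext (by
          have := sub_eq_zero.mp h
          simpa using this))
      refine smul_cancel b hne ?_
      rw [sub_smul, one_smul, ← hS2, sub_self]
    rw [hPS, hSzero, smul_zero]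
  -- uniqueness of representatives in the same orbit
  have huniq : ∀ j j₀ : Fin d → L, j ∈ R → j₀ ∈ R →
      (∃ σ : W, j ∘ ⇑(((σ : Equiv.Perm (Fin d)))⁻¹) = j₀) → j = j₀ := by
    rintro j j₀ hj hj₀ ⟨σ, hσ⟩
    obtain ⟨w, _, hwu⟩ := hR j₀
    have h1 : j = j₀ ∘ ⇑((((σ⁻¹ : W) : Equiv.Perm (Fin d)))⁻¹) := by
      funext t
      have := congrFun hσ (((σ : Equiv.Perm (Fin d))) t)
      simp only [Function.comp_apply, Equiv.Perm.inv_def, Equiv.symm_apply_apply] at this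
      simp only [Function.comp_apply, InvMemClass.coe_inv, inv_inv]
      exact this
    have e1 := hwu j ⟨hj, σ⁻¹, h1⟩
    have e2 := hwu j₀ ⟨hj₀, 1, by simp⟩
    rw [e1, e2]
  -- coordinates of P (bT i)
  have hcoord : ∀ (i p : Fin d → L),
      coordMap b d (P (bT i)) p = (↑u⁻¹ : K) * ∑ σ : W, ((χ σ : Kˣ) : K) *
        (if i ∘ ⇑(((σ : Equiv.Perm (Fin d)))⁻¹) = p then 1 else 0) := by
    intro i p
    rw [hPdef, projP_apply, map_smul, map_sum]
    rw [DFinsupp.smul_apply, smul_eq_mul]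
    congr 1
    rw [DFinsupp.finset_sum_apply]
    refine Finset.sum_congr rfl (fun σ _ => ?_)
    rw [map_smul, DFinsupp.smul_apply, smul_eq_mul]
    congr 1
    rw [hbT σ i, hbTdef]
    rw [coordMap_tprod_basis b (i ∘ ⇑(((σ : Equiv.Perm (Fin d)))⁻¹))]
    by_cases h : i ∘ ⇑(((σ : Equiv.Perm (Fin d)))⁻¹) = p
    · subst h
      simp
    · rw [if_neg h, DFinsupp.single_eq_of_ne (Ne.symm h)]
  -- the candidate basis family
  set v : {j : Fin d → L // j ∈ R ∧
      ∀ σ : W, j ∘ ⇑(((σ : Equiv.Perm (Fin d)))⁻¹) = j → χ σ = 1} → SemiPow E W χ :=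
    fun j => Submodule.Quotient.mk (bT j.1) with hvdef
  -- stabilizer character sums are nonzero
  have hstab : ∀ j : {j : Fin d → L // j ∈ R ∧
      ∀ σ : W, j ∘ ⇑(((σ : Equiv.Perm (Fin d)))⁻¹) = j → χ σ = 1},
      (∑ σ : W, ((χ σ : Kˣ) : K) *
        (if j.1 ∘ ⇑(((σ : Equiv.Perm (Fin d)))⁻¹) = j.1 then 1 else 0)) ≠ 0 := by
    intro j
    set St : Finset W := Finset.univ.filter
      (fun σ : W => j.1 ∘ ⇑(((σ : Equiv.Perm (Fin d)))⁻¹) = j.1) with hSt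
    have hsum : (∑ σ : W, ((χ σ : Kˣ) : K) *
        (if j.1 ∘ ⇑(((σ : Equiv.Perm (Fin d)))⁻¹) = j.1 then 1 else 0))
        = (St.card : K) := by
      have h1 : ∀ σ : W, ((χ σ : Kˣ) : K) *
          (if j.1 ∘ ⇑(((σ : Equiv.Perm (Fin d)))⁻¹) = j.1 then 1 else 0)
          = (if j.1 ∘ ⇑(((σ : Equiv.Perm (Fin d)))⁻¹) = j.1 then ((χ σ : Kˣ) : K) else 0) := by
        intro σ
        split_ifs <;> simp
      rw [Finset.sum_congr rfl (fun σ _ => h1 σ), ← Finset.sum_filter, ← hSt]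
      have h2 : ∀ σ ∈ St, ((χ σ : Kˣ) : K) = 1 := by
        intro σ hσ
        rw [hSt, Finset.mem_filter] at hσ
        rw [j.2.2 σ hσ.2, Units.val_one]
      rw [Finset.sum_congr rfl h2, Finset.sum_const, nsmul_eq_mul, mul_one]
    rw [hsum]
    -- the cardinality of the stabilizer divides |W|
    have hdvd : St.card ∣ Fintype.card W := by
      let H : Subgroup W :=
        { carrier := {σ : W | j.1 ∘ ⇑(((σ : Equiv.Perm (Fin d)))⁻¹) = j.1}
          one_mem' := by simp; rfl
          mul_mem' := by
            intro a c ha hc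
            simp only [Set.mem_setOf_eq] at ha hc ⊢
            funext t
            have h1 : ((((a * c : W) : Equiv.Perm (Fin d)))⁻¹) t
                = ((c : Equiv.Perm (Fin d)))⁻¹ (((a : Equiv.Perm (Fin d)))⁻¹ t) := by
              simp [mul_inv_rev, Equiv.Perm.mul_apply]
            rw [Function.comp_apply, h1]
            have h2 := congrFun hc (((a : Equiv.Perm (Fin d)))⁻¹ t)
            rw [Function.comp_apply] at h2
            rw [h2]
            exact congrFun ha t
          inv_mem' := by
            intro a ha
            simp only [Set.mem_setOf_eq] at ha ⊢
            funext t
            simp only [Function.comp_apply, InvMemClass.coe_inv, inv_inv]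
            have := congrFun ha (((a : Equiv.Perm (Fin d))) t)
            simp only [Function.comp_apply, Equiv.Perm.inv_def, Equiv.symm_apply_apply] at this
            exact this.symm }
      have h1 : Nat.card H ∣ Nat.card W := Subgroup.card_subgroup_dvd_card H
      have h2 : Nat.card H = St.card := by
        have e : H ≃ {σ : W // j.1 ∘ ⇑(((σ : Equiv.Perm (Fin d)))⁻¹) = j.1} :=
          Equiv.subtypeEquivRight (fun σ => Iff.rfl)
        rw [hSt, Nat.card_congr e, Nat.card_eq_fintype_card, Fintype.card_subtype]
      rwa [h2, Nat.card_eq_fintype_card] at h1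
    intro h0
    obtain ⟨m, hm⟩ := hdvd
    have hzero : (Fintype.card W : K) = 0 := by
      rw [hm, Nat.cast_mul, h0, zero_mul]
    rw [← hu] at hzero
    exact u.ne_zero hzero
  -- linear independence
  have hind : LinearIndependent K v := by
    rw [linearIndependent_iff']
    intro s g hsum0 j₀ hj₀
    set z := ∑ j ∈ s, g j • bT j.1 with hz
    have hzmem : z ∈ chiKer E W χ := by
      have hmkz : (chiKer E W χ).mkQ z = 0 := by
        rw [hz, map_sum]
        simp only [map_smul, Submodule.mkQ_apply]
        exact hsum0
      have := LinearMap.mem_ker.mpr hmkz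
      rwa [Submodule.ker_mkQ] at this
    have hPz : P z = 0 := by
      rw [hker, LinearMap.mem_ker] at hzmem
      exact hzmem
    have hc := congrArg (fun w => coordMap b d w j₀.1) hPz
    simp only [map_zero, DFinsupp.zero_apply] at hc
    have hPbT : ∀ j ∈ s, j ≠ j₀ →
        g j * (coordMap b d (P (bT j.1)) j₀.1) = 0 := by
      intro j _ hne
      rw [hcoord j.1 j₀.1]
      have hterm : ∀ σ : W, (((χ σ : Kˣ) : K) *
          (if j.1 ∘ ⇑(((σ : Equiv.Perm (Fin d)))⁻¹) = j₀.1 then 1 else 0)) = 0 := by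
        intro σ
        rw [if_neg, mul_zero]
        intro hcond
        exact hne (Subtype.ext (huniq j.1 j₀.1 j.2.1 j₀.2.1 ⟨σ, hcond⟩))
      rw [Finset.sum_congr rfl (fun σ _ => hterm σ), Finset.sum_const_zero, mul_zero, mul_zero]
    have hkey : coordMap b d (P z) j₀.1
        = g j₀ * coordMap b d (P (bT j₀.1)) j₀.1 := by
      rw [hz, map_sum, map_sum, DFinsupp.finset_sum_apply]
      have : ∀ j ∈ s, (coordMap b d (P (g j • bT j.1))) j₀.1
          = g j * coordMap b d (P (bT j.1)) j₀.1 := by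
        intro j _
        rw [map_smul, map_smul, DFinsupp.smul_apply, smul_eq_mul]
      rw [Finset.sum_congr rfl this]
      exact Finset.sum_eq_single_of_mem j₀ hj₀ hPbT
    rw [hkey, hcoord j₀.1 j₀.1] at hc
    have hne2 : (↑u⁻¹ : K) * (∑ σ : W, ((χ σ : Kˣ) : K) *
        (if j₀.1 ∘ ⇑(((σ : Equiv.Perm (Fin d)))⁻¹) = j₀.1 then 1 else 0)) ≠ 0 :=
      mul_ne_zero (Units.ne_zero u⁻¹) (hstab j₀)
    exact (mul_eq_zero.mp hc).resolve_right hne2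
  -- spanning
  have hspan : ⊤ ≤ Submodule.span K (Set.range v) := by
    rintro y -
    obtain ⟨z, rfl⟩ := Submodule.Quotient.mk_surjective _ y
    have hz : z ∈ Submodule.span K (Set.range
        (fun i : Fin d → L => PiTensorProduct.tprod K (fun t => b (i t)))) := by
      rw [span_tprod_basis_eq_top b]
      trivial
    refine Submodule.span_induction ?_ ?_ ?_ ?_ hz
      (p := fun z _ => (Submodule.Quotient.mk z : SemiPow E W χ)
        ∈ Submodule.span K (Set.range v))
    · rintro _ ⟨i, rfl⟩
      dsimp only
      obtain ⟨j, ⟨hjR, σ, hjσ⟩, -⟩ := hR i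
      have hrel : (Submodule.Quotient.mk (bT i) : SemiPow E W χ)
          = ((χ σ : Kˣ) : K) • Submodule.Quotient.mk (bT j) := by
        rw [hjσ, hmk σ i, smul_smul, Units.mul_inv, one_smul]
      rw [show (Submodule.Quotient.mk (PiTensorProduct.tprod K (fun t => b (i t)))
          : SemiPow E W χ) = Submodule.Quotient.mk (bT i) from rfl, hrel]
      by_cases hJ : ∀ τ : W, j ∘ ⇑(((τ : Equiv.Perm (Fin d)))⁻¹) = j → χ τ = 1
      · exact Submodule.smul_mem _ _ (Submodule.subset_span ⟨⟨j, hjR, hJ⟩, rfl⟩)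
      · push_neg at hJ
        have h0 : (Submodule.Quotient.mk (bT j) : SemiPow E W χ) = 0 := by
          rw [Submodule.Quotient.mk_eq_zero, hker, LinearMap.mem_ker]
          exact hPzero j hJ
        rw [h0, smul_zero]
        exact Submodule.zero_mem _
    · rw [Submodule.Quotient.mk_zero]
      exact Submodule.zero_mem _
    · intro x y _ _ hx hy
      rw [Submodule.Quotient.mk_add]
      exact Submodule.add_mem _ hx hy
    · intro a x _ hx
      rw [Submodule.Quotient.mk_smul]
      exact Submodule.smul_mem _ _ hx
  refine ⟨Module.Basis.mk hind hspan, fun j => ?_⟩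
  rw [Module.Basis.mk_apply]
  rfl
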